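/- Nonnegativity of the γ-vector of 2-truncated cubes (Gal's conjecture for this class): let n ≥ 1 and let K be a simplicial complex obtained from the boundary complex ∂♢ⁿ of the n-dimensional cross-polytope by a finite sequence of stellar subdivisions at edges (each with a fresh apex vertex). Then there exist nonnegative integers γ_0, γ_1, …, γ_{⌊n/2⌋} with γ_0 = 1 such that Σ_{i=0}^{n} f_{i-1}(K)·tⁱ·(1-t)^{n-i} = Σ_{i=0}^{⌊n/2⌋} γ_i·tⁱ·(1+t)^{n-2i} in ℤ[t]; in particular the h-polynomial of K of rank n is palindromic. -/

import Mathlib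

open Polynomial
open scoped Classical

/-- A (finite) simplicial complex: a family of finite faces closed under subsets. -/
def IsComplex {V : Type*} (K : Finset (Finset V)) : Prop :=
  ∀ F ∈ K, ∀ G ⊆ F, G ∈ K

/-- A flag simplicial complex: any set of vertices that is pairwise connected
by edges of `K` is a face of `K`. -/
def IsFlag {V : Type*} [DecidableEq V] (K : Finset (Finset V)) : Prop :=
  IsComplex K ∧ ∀ S : Finset V,
    (∀ v ∈ S, ({v} : Finset V) ∈ K) →
    (∀ u ∈ S, ∀ v ∈ S, u ≠ v → ({u, v} : Finset V) ∈ K) →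
    S ∈ K

/-- The link of a face `σ` in `K`. -/
noncomputable def link {V : Type*} [DecidableEq V] (K : Finset (Finset V)) (σ : Finset V) :
    Finset (Finset V) :=
  K.filter fun F => Disjoint F σ ∧ F ∪ σ ∈ K

/-- Stellar subdivision of `K` at the face `e` with (fresh) apex `w`:
`sd_e(K) = {F ∈ K : ¬(e ⊆ F)} ∪ {F ∪ S ∪ {w} : F ∈ link_K(e), S ⊊ e}`. -/
noncomputable def stellarSub {V : Type*} [DecidableEq V] (K : Finset (Finset V))
    (e : Finset V) (w : V) : Finset (Finset V) :=
  (K.filter fun F => ¬ e ⊆ F) ∪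
    (link K e).biUnion fun F => e.ssubsets.image fun S => F ∪ S ∪ {w}

/-- The f-polynomial `f(K)(t) = Σ_{F ∈ K} t^|F| = Σ_i f_{i-1}(K) tⁱ`. -/
noncomputable def fPoly {V : Type*} (K : Finset (Finset V)) : ℤ[X] :=
  ∑ F ∈ K, X ^ F.card

/-- The h-polynomial of rank `n`:
`h_n(K)(t) = Σ_{i=0}^{n} f_{i-1}(K) tⁱ (1-t)^{n-i} = Σ_{F ∈ K} t^|F| (1-t)^{n-|F|}`. -/
noncomputable def hPoly {V : Type*} (K : Finset (Finset V)) (n : ℕ) : ℤ[X] :=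
  ∑ F ∈ K, X ^ F.card * (1 - X) ^ (n - F.card)

/-- `faceCount K i = f_{i-1}(K)`, the number of faces of `K` of cardinality `i`. -/
noncomputable def faceCount {V : Type*} (K : Finset (Finset V)) (i : ℕ) : ℕ :=
  (K.filter fun F => F.card = i).card

/-- The boundary complex `∂♢ⁿ` of the `n`-dimensional cross-polytope, with
vertices `a_i = 2i`, `b_i = 2i+1` (`0 ≤ i < n`): all subsets containing at most
one of `a_i, b_i` for each `i`. -/
noncomputable def crossPolytopeBoundary (n : ℕ) : Finset (Finset ℕ) :=
  (Finset.range (2 * n)).powerset.filter fun F =>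
    ∀ i < n, ¬ (2 * i ∈ F ∧ 2 * i + 1 ∈ F)

/-- Complexes obtained from `∂♢ⁿ` by a finite sequence of stellar subdivisions
at edges, each with a fresh apex vertex: the boundary complexes of duals of
2-truncated `n`-cubes. -/
inductive TwoTruncated (n : ℕ) : Finset (Finset ℕ) → Prop
  | base : TwoTruncated n (crossPolytopeBoundary n)
  | step (K : Finset (Finset ℕ)) (a b w : ℕ) :
      TwoTruncated n K → a ≠ b → ({a, b} : Finset ℕ) ∈ K →
      (∀ F ∈ K, w ∉ F) →
      TwoTruncated n (stellarSub K {a, b} w)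


section Dev
variable {V : Type*} [DecidableEq V]

lemma mem_link {K : Finset (Finset V)} {σ F : Finset V} :
    F ∈ link K σ ↔ F ∈ K ∧ Disjoint F σ ∧ F ∪ σ ∈ K := by simp [link]

lemma link_empty {K : Finset (Finset V)} : link K ∅ = K := by
  ext F; simp [link]

lemma isComplex_link {K : Finset (Finset V)} (hK : IsComplex K) (σ : Finset V) :
    IsComplex (link K σ) := by
  intro F hF G hG
  rw [mem_link] at *
  obtain ⟨h1, h2, h3⟩ := hF
  exact ⟨hK F h1 G hG, Finset.disjoint_of_subset_left hG h2,
    hK _ h3 _ (Finset.union_subset_union_left hG)⟩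

lemma link_link {K : Finset (Finset V)} (hK : IsComplex K) {σ e : Finset V}
    (hd : Disjoint e σ) : link (link K σ) e = link K (e ∪ σ) := by
  ext G
  simp only [mem_link]
  constructor
  · rintro ⟨⟨hG, hGσ, hGσK⟩, hGe, ⟨_, hGeσ, hGeσK⟩⟩
    rw [Finset.union_assoc] at hGeσK
    exact ⟨hG, by rw [Finset.disjoint_union_right]; exact ⟨hGe, hGσ⟩, hGeσK⟩
  · rintro ⟨hG, hdis, hU⟩
    rw [Finset.disjoint_union_right] at hdis
    refine ⟨⟨hG, hdis.2, hK _ hU _ ?_⟩, hdis.1, ⟨hK _ hU _ ?_, ?_, ?_⟩⟩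
    · intro x hx; simp only [Finset.mem_union] at *; tauto
    · intro x hx; simp only [Finset.mem_union] at *; tauto
    · rw [Finset.disjoint_union_left]; exact ⟨hdis.2, hd⟩
    · rw [Finset.union_assoc]; exact hU

lemma pair_ssubsets {a b : V} (hab : a ≠ b) :
    ({a, b} : Finset V).ssubsets = {∅, {a}, {b}} := by
  ext S
  simp only [Finset.mem_ssubsets, Finset.mem_insert, Finset.mem_singleton]
  constructor
  · intro h
    have hsub := h.subset
    have hne := h.ne
    by_cases ha : a ∈ S <;> by_cases hb : b ∈ S
    · exact absurd (Finset.Subset.antisymm hsub (by intro x hx; simp at hx; rcases hx with rfl|rfl <;> assumption)) hne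
    · right; left
      apply Finset.Subset.antisymm
      · intro x hx; have := hsub hx; simp at this ⊢; rcases this with rfl|rfl; rfl; exact absurd hx hb
      · simpa using ha
    · right; right
      apply Finset.Subset.antisymm
      · intro x hx; have := hsub hx; simp at this ⊢; rcases this with rfl|rfl; exact absurd hx ha; rfl
      · simpa using hb
    · left
      ext x; simp; intro hx; have := hsub hx; simp at this; rcases this with rfl|rfl <;> tauto
  · rintro (rfl|rfl|rfl)
    · exact Finset.empty_ssubset.mpr (by simp)
    · constructor
      · simp
      · intro h; have := h (by simp : b ∈ ({a,b}:Finset V)); simp at this; exact hab this.symm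
    · constructor
      · intro x hx; simp at hx; simp [hx]
      · intro h; have := h (by simp : a ∈ ({a,b}:Finset V)); simp at this; exact hab this

end Dev

noncomputable def gexp (γ : ℕ → ℕ) (m : ℕ) : ℤ[X] :=
  ∑ i ∈ Finset.range (m / 2 + 1), (γ i : ℤ[X]) * X ^ i * (1 + X) ^ (m - 2 * i)

lemma gexp_pow (m : ℕ) : gexp (fun i => if i = 0 then 1 else 0) m = (1 + X) ^ m := by
  unfold gexp
  rw [Finset.sum_eq_single 0]
  · simp
  · intro i _ hi; simp [hi]
  · intro h; exact absurd (Finset.self_mem_range_succ 0) (by simpa using h)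

lemma gexp_step (γ δ : ℕ → ℕ) (m : ℕ) (hm : 2 ≤ m) :
    gexp γ m + X * gexp δ (m - 2)
      = gexp (fun i => γ i + if i = 0 then 0 else δ (i - 1)) m := by
  unfold gexp
  have key : ∀ i : ℕ, ((γ i + if i = 0 then 0 else δ (i-1) : ℕ) : ℤ[X]) * X ^ i * (1+X) ^ (m - 2*i)
      = (γ i : ℤ[X]) * X ^ i * (1+X)^(m-2*i)
        + ((if i = 0 then 0 else (δ (i-1):ℤ[X])) * X ^ i * (1+X)^(m-2*i)) := by
    intro i
    push_cast
    split_ifs <;> ring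
  rw [Finset.sum_congr rfl (fun i _ => key i), Finset.sum_add_distrib]
  congr 1
  have h2 : (m - 2) / 2 + 1 = m / 2 := by omega
  rw [h2, Finset.mul_sum, Finset.sum_range_succ' (fun i => (if i = 0 then 0 else (δ (i-1):ℤ[X])) * X ^ i * (1+X)^(m-2*i)) (m/2)]
  simp only [Nat.succ_ne_zero, ↓reduceIte, Nat.add_sub_cancel, zero_mul, add_zero]
  apply Finset.sum_congr rfl
  intro i _
  have : m - 2 * (i + 1) = m - 2 - 2 * i := by omega
  rw [this]; ring

lemma gexp_mul (γ : ℕ → ℕ) (m : ℕ) (hm : 1 ≤ m) :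
    (1 + X) * gexp γ (m - 1)
      = gexp (fun i => if i ≤ (m-1)/2 then γ i else 0) m := by
  unfold gexp
  rw [Finset.mul_sum]
  rw [← Finset.sum_subset (Finset.range_subset_range.mpr (by omega : (m-1)/2 + 1 ≤ m/2 + 1))]
  · apply Finset.sum_congr rfl
    intro i hi
    simp only [Finset.mem_range] at hi
    have h1 : i ≤ (m-1)/2 := by omega
    dsimp only
    rw [if_pos h1]
    have h2 : m - 2 * i = (m - 1 - 2 * i) + 1 := by omega
    rw [h2, pow_succ]
    ring
  · intro i _ hi
    simp only [Finset.mem_range, not_lt] at hi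
    dsimp only
    rw [if_neg (by omega)]
    simp

lemma gexp_coeff_symm (γ : ℕ → ℕ) (n : ℕ) :
    ∀ j ≤ n, (gexp γ n).coeff j = (gexp γ n).coeff (n - j) := by
  intro j hj
  unfold gexp
  rw [finset_sum_coeff, finset_sum_coeff]
  apply Finset.sum_congr rfl
  intro i hi
  simp only [Finset.mem_range] at hi
  have h2i : 2 * i ≤ n := by omega
  have key : ∀ k : ℕ, ((γ i : ℤ[X]) * X ^ i * (1+X)^(n-2*i)).coeff k
      = if i ≤ k then (γ i : ℤ) * ((n - 2*i).choose (k - i) : ℤ) else 0 := by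
    intro k
    rw [← Polynomial.C_eq_natCast, mul_right_comm, Polynomial.coeff_mul_X_pow']
    split_ifs with h
    · rw [Polynomial.coeff_C_mul, add_comm (1:ℤ[X]) X, Polynomial.coeff_X_add_one_pow]
    · rfl
  rw [key, key]
  by_cases h1 : i ≤ j <;> by_cases h2 : i ≤ n - j
  · rw [if_pos h1, if_pos h2]
    congr 1
    norm_cast
    have h3 : j - i ≤ n - 2*i := by omega
    rw [← Nat.choose_symm h3]
    congr 1
    omega
  · rw [if_pos h1, if_neg h2, Nat.choose_eq_zero_of_lt (by omega)]
    simp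
  · rw [if_neg h1, if_pos h2, Nat.choose_eq_zero_of_lt (by omega)]
    simp
  · rw [if_neg h1, if_neg h2]


/-- generalized cross-polytope complex on pair-indices `s` -/
noncomputable def crossC (s : Finset ℕ) : Finset (Finset ℕ) :=
  ((s.biUnion fun i => {2*i, 2*i+1}).powerset).filter fun F =>
    ∀ i ∈ s, ¬ (2*i ∈ F ∧ 2*i+1 ∈ F)

lemma mem_crossC {s F : Finset ℕ} :
    F ∈ crossC s ↔ (∀ x ∈ F, x / 2 ∈ s) ∧ ∀ i ∈ s, ¬(2*i ∈ F ∧ 2*i+1 ∈ F) := by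
  unfold crossC
  rw [Finset.mem_filter, Finset.mem_powerset]
  constructor
  · rintro ⟨h1, h2⟩
    refine ⟨?_, h2⟩
    intro x hx
    have := h1 hx
    simp only [Finset.mem_biUnion, Finset.mem_insert, Finset.mem_singleton] at this
    obtain ⟨i, hi, hx2⟩ := this
    have hxi : x / 2 = i := by omega
    rwa [hxi]
  · rintro ⟨h1, h2⟩
    refine ⟨?_, h2⟩
    intro x hx
    simp only [Finset.mem_biUnion, Finset.mem_insert, Finset.mem_singleton]
    exact ⟨x/2, h1 x hx, by omega⟩

lemma isComplex_crossC (s : Finset ℕ) : IsComplex (crossC s) := by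
  intro F hF G hG
  rw [mem_crossC] at *
  exact ⟨fun x hx => hF.1 x (hG hx), fun i hi h => hF.2 i hi ⟨hG h.1, hG h.2⟩⟩

lemma card_crossC {s F : Finset ℕ} (hF : F ∈ crossC s) : F.card ≤ s.card := by
  rw [mem_crossC] at hF
  apply Finset.card_le_card_of_injOn (fun x => x / 2) (fun x hx => hF.1 x hx)
  intro x hx y hy hxy
  simp only at hxy
  simp only [Finset.mem_coe] at hx hy
  by_contra hne
  have hi : x / 2 ∈ s := hF.1 x hx
  have : (2 * (x/2) ∈ F ∧ 2 * (x/2) + 1 ∈ F) := by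
    have hx2 : x = 2 * (x/2) ∨ x = 2 * (x/2) + 1 := by omega
    have hy2 : y = 2 * (x/2) ∨ y = 2 * (x/2) + 1 := by omega
    rcases hx2 with h|h <;> rcases hy2 with h'|h'
    · exact absurd (by omega : x = y) hne
    · exact ⟨h ▸ hx, h' ▸ hy⟩
    · exact ⟨h' ▸ hy, h ▸ hx⟩
    · exact absurd (by omega : x = y) hne
  exact hF.2 _ hi this

lemma crossC_empty : crossC ∅ = {∅} := by
  ext F
  simp only [mem_crossC, Finset.notMem_empty, Finset.mem_singleton]
  constructor
  · rintro ⟨h1, -⟩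
    exact Finset.eq_empty_iff_forall_notMem.mpr fun x hx => h1 x hx
  · rintro rfl; simp

lemma crossC_insert {i : ℕ} {s : Finset ℕ} (hi : i ∉ s) :
    crossC (insert i s)
      = ((crossC s) ×ˢ ({2*i, 2*i+1} : Finset ℕ).ssubsets).image fun p => p.1 ∪ p.2 := by
  ext F
  simp only [Finset.mem_image, Finset.mem_product, Finset.mem_ssubsets, Prod.exists]
  constructor
  · intro hF
    rw [mem_crossC] at hF
    refine ⟨F.filter (fun x => x/2 ≠ i), F.filter (fun x => x/2 = i), ⟨?_, ?_⟩, ?_⟩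
    · rw [mem_crossC]
      constructor
      · intro x hx
        rw [Finset.mem_filter] at hx
        have := hF.1 x hx.1
        simp only [Finset.mem_insert] at this
        rcases this with h|h
        · exact absurd h hx.2
        · exact h
      · intro j hj ⟨h1, h2⟩
        rw [Finset.mem_filter] at h1 h2
        exact hF.2 j (Finset.mem_insert_of_mem hj) ⟨h1.1, h2.1⟩
    · rw [Finset.ssubset_iff_subset_ne]
      constructor
      · intro x hx
        rw [Finset.mem_filter] at hx
        simp only [Finset.mem_insert, Finset.mem_singleton]
        omega
      · intro h
        have h1 : 2*i ∈ F := by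
          have : 2*i ∈ F.filter (fun x => x/2 = i) := by rw [h]; simp
          exact (Finset.mem_filter.mp this).1
        have h2 : 2*i+1 ∈ F := by
          have : 2*i+1 ∈ F.filter (fun x => x/2 = i) := by rw [h]; simp
          exact (Finset.mem_filter.mp this).1
        exact hF.2 i (Finset.mem_insert_self i s) ⟨h1, h2⟩
    · ext x
      simp only [Finset.mem_union, Finset.mem_filter]
      tauto
  · rintro ⟨G, S, ⟨hG, hS⟩, rfl⟩
    rw [mem_crossC] at hG ⊢
    have hSsub := hS.subset
    have hGnoti : ∀ x ∈ G, x / 2 ≠ i := by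
      intro x hx h
      exact hi (h ▸ hG.1 x hx)
    constructor
    · intro x hx
      rw [Finset.mem_union] at hx
      rcases hx with hx|hx
      · exact Finset.mem_insert_of_mem (hG.1 x hx)
      · have := hSsub hx
        simp only [Finset.mem_insert, Finset.mem_singleton] at this
        have : x / 2 = i := by omega
        rw [this]; exact Finset.mem_insert_self i s
    · intro j hj ⟨h1, h2⟩
      rw [Finset.mem_union] at h1 h2
      rw [Finset.mem_insert] at hj
      rcases hj with rfl|hj
      · -- j = i : both can't be in G, so both in S, contradiction with S ⊊ pair
        have h1' : 2*j ∈ S := by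
          rcases h1 with h|h
          · exact absurd (by omega : (2*j)/2 = j) (hGnoti _ h)
          · exact h
        have h2' : 2*j+1 ∈ S := by
          rcases h2 with h|h
          · exact absurd (by omega : (2*j+1)/2 = j) (hGnoti _ h)
          · exact h
        have : ({2*j, 2*j+1} : Finset ℕ) ⊆ S := by
          intro x hx; simp only [Finset.mem_insert, Finset.mem_singleton] at hx
          rcases hx with rfl|rfl <;> assumption
        exact absurd (Finset.Subset.antisymm hSsub this) (Finset.ssubset_iff_subset_ne.mp hS).2
      · -- j ∈ s, j ≠ i
        have hji : j ≠ i := fun h => hi (h ▸ hj)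
        have h1' : 2*j ∈ G := by
          rcases h1 with h|h
          · exact h
          · have := hSsub h; simp only [Finset.mem_insert, Finset.mem_singleton] at this; omega
        have h2' : 2*j+1 ∈ G := by
          rcases h2 with h|h
          · exact h
          · have := hSsub h; simp only [Finset.mem_insert, Finset.mem_singleton] at this; omega
        exact hG.2 j hj ⟨h1', h2'⟩

lemma hPoly_joinPair (L : Finset (Finset ℕ)) (a b : ℕ) (hab : a ≠ b)
    (hL : ∀ G ∈ L, a ∉ G ∧ b ∉ G) (m : ℕ) (hc : ∀ G ∈ L, G.card ≤ m) :
    hPoly ((L ×ˢ ({a, b} : Finset ℕ).ssubsets).image fun p => p.1 ∪ p.2) (m+1)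
      = (1 + X) * hPoly L m := by
  unfold hPoly
  have key : ∀ p ∈ L ×ˢ ({a,b} : Finset ℕ).ssubsets,
      p.1 = (p.1 ∪ p.2) \ {a,b} := by
    intro p hp
    rw [Finset.mem_product, Finset.mem_ssubsets] at hp
    obtain ⟨h1, h2⟩ := hp
    have ha := (hL _ h1).1
    have hb := (hL _ h1).2
    have hsub := h2.subset
    ext x
    simp only [Finset.mem_sdiff, Finset.mem_union, Finset.mem_insert, Finset.mem_singleton]
    constructor
    · intro hx
      refine ⟨Or.inl hx, ?_⟩
      rintro (rfl|rfl)
      · exact ha hx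
      · exact hb hx
    · rintro ⟨hx|hx, hnab⟩
      · exact hx
      · exfalso
        have := hsub hx
        simp only [Finset.mem_insert, Finset.mem_singleton] at this
        tauto
  rw [Finset.sum_image]
  swap
  · intro p hp q hq heq
    have hp1 := key p hp
    have hq1 := key q hq
    have e1 : p.1 = q.1 := by rw [hp1, hq1, show p.1 ∪ p.2 = q.1 ∪ q.2 from heq]
    have e2 : p.2 = q.2 := by
      rw [Finset.mem_coe, Finset.mem_product] at hp hq
      have : p.1 ∪ p.2 = q.1 ∪ q.2 := heq
      rw [e1] at this
      -- p.2 = (p.1 ∪ p.2) \ p.1  since disjoint? not exactly; use ext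
      have hpd : Disjoint q.1 p.2 := by
        rw [← e1]
        rw [Finset.mem_ssubsets] at hp
        have := hp.2.subset
        rw [Finset.disjoint_right]
        intro x hx
        have hx2 := this hx
        simp only [Finset.mem_insert, Finset.mem_singleton] at hx2
        rcases hx2 with rfl|rfl
        · exact (hL _ hp.1).1
        · exact (hL _ hp.1).2
      have hqd : Disjoint q.1 q.2 := by
        rw [Finset.mem_ssubsets] at hq
        have := hq.2.subset
        rw [Finset.disjoint_right]
        intro x hx
        have hx2 := this hx
        simp only [Finset.mem_insert, Finset.mem_singleton] at hx2
        rcases hx2 with rfl|rfl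
        · exact (hL _ hq.1).1
        · exact (hL _ hq.1).2
      ext x
      constructor
      · intro hx
        have : x ∈ q.1 ∪ q.2 := by rw [← this]; exact Finset.mem_union_right _ hx
        rw [Finset.mem_union] at this
        rcases this with h|h
        · exact absurd hx (Finset.disjoint_left.mp hpd h)
        · exact h
      · intro hx
        have : x ∈ q.1 ∪ p.2 := by rw [this]; exact Finset.mem_union_right _ hx
        rw [Finset.mem_union] at this
        rcases this with h|h
        · exact absurd hx (Finset.disjoint_left.mp hqd h)
        · exact h
    exact Prod.ext e1 e2
  rw [Finset.sum_product, Finset.mul_sum]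
  apply Finset.sum_congr rfl
  intro G hG
  rw [pair_ssubsets hab]
  have hne1 : (∅ : Finset ℕ) ∉ ({({a} : Finset ℕ), {b}} : Finset (Finset ℕ)) := by
    simp only [Finset.mem_insert, Finset.mem_singleton]
    push_neg
    exact ⟨(Finset.singleton_ne_empty a).symm, (Finset.singleton_ne_empty b).symm⟩
  have hne2 : ({a} : Finset ℕ) ∉ ({({b} : Finset ℕ)} : Finset (Finset ℕ)) := by
    simp only [Finset.mem_singleton]
    intro h
    exact hab (Finset.singleton_injective h)
  rw [Finset.sum_insert hne1, Finset.sum_insert hne2, Finset.sum_singleton]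
  have hga := (hL G hG).1
  have hgb := (hL G hG).2
  have hca : (G ∪ {a}).card = G.card + 1 := by
    rw [Finset.card_union_of_disjoint (by simp [hga])]
    simp
  have hcb : (G ∪ {b}).card = G.card + 1 := by
    rw [Finset.card_union_of_disjoint (by simp [hgb])]
    simp
  rw [Finset.union_empty, hca, hcb]
  have hle := hc G hG
  have e1 : m + 1 - G.card = (m - G.card) + 1 := by omega
  have e2 : m + 1 - (G.card + 1) = m - G.card := by omega
  rw [e1, e2, pow_succ]
  ring

lemma hPoly_crossC (s : Finset ℕ) : hPoly (crossC s) s.card = (1 + X) ^ s.card := by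
  induction s using Finset.induction_on with
  | empty => simp [crossC_empty, hPoly]
  | @insert i s hi ih =>
    rw [crossC_insert hi, Finset.card_insert_of_notMem hi]
    rw [hPoly_joinPair _ _ _ (by omega) ?_ s.card ?_, ih, pow_succ]
    · ring
    · intro G hG
      rw [mem_crossC] at hG
      constructor
      · intro h; exact hi (by simpa using hG.1 _ h)
      · intro h
        have := hG.1 _ h
        have h2 : (2*i+1)/2 = i := by omega
        rw [h2] at this
        exact hi this
    · intro G hG
      exact card_crossC hG

lemma link_crossC {s σ : Finset ℕ} (hσ : σ ∈ crossC s) :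
    link (crossC s) σ = crossC (s.filter fun i => ¬(2*i ∈ σ) ∧ ¬(2*i+1 ∈ σ)) := by
  have hσ' := mem_crossC.mp hσ
  ext F
  constructor
  · intro hF
    obtain ⟨hFK, hdis, hFσ⟩ := mem_link.mp hF
    have hF' := mem_crossC.mp hFK
    have hFσ' := mem_crossC.mp hFσ
    rw [mem_crossC]
    constructor
    · intro x hx
      rw [Finset.mem_filter]
      have hxs := hF'.1 x hx
      refine ⟨hxs, ?_, ?_⟩
      · intro h2i
        have hx2 : x = 2*(x/2) ∨ x = 2*(x/2)+1 := by omega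
        rcases hx2 with h|h
        · exact Finset.disjoint_left.mp hdis hx (h ▸ h2i)
        · exact hFσ'.2 (x/2) hxs ⟨Finset.mem_union_right _ h2i, Finset.mem_union_left _ (h ▸ hx)⟩
      · intro h2i
        have hx2 : x = 2*(x/2) ∨ x = 2*(x/2)+1 := by omega
        rcases hx2 with h|h
        · exact hFσ'.2 (x/2) hxs ⟨Finset.mem_union_left _ (h ▸ hx), Finset.mem_union_right _ h2i⟩
        · exact Finset.disjoint_left.mp hdis hx (h ▸ h2i)
    · intro i hi
      exact hF'.2 i (Finset.mem_filter.mp hi).1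
  · intro hF
    obtain ⟨h1, h2⟩ := mem_crossC.mp hF
    have hFs : ∀ x ∈ F, x / 2 ∈ s := fun x hx => (Finset.mem_filter.mp (h1 x hx)).1
    have hFfree : ∀ x ∈ F, ¬(2*(x/2) ∈ σ) ∧ ¬(2*(x/2)+1 ∈ σ) :=
      fun x hx => (Finset.mem_filter.mp (h1 x hx)).2
    have hdis : Disjoint F σ := by
      rw [Finset.disjoint_left]
      intro x hx hxσ
      have := hFfree x hx
      have hx2 : x = 2*(x/2) ∨ x = 2*(x/2)+1 := by omega
      rcases hx2 with h|h
      · exact this.1 (h ▸ hxσ)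
      · exact this.2 (h ▸ hxσ)
    have hFK : ∀ i ∈ s, ¬(2*i ∈ F ∧ 2*i+1 ∈ F) := by
      intro i hi hpair
      have hmem := h1 _ hpair.1
      have e : (2*i)/2 = i := by omega
      rw [e] at hmem
      exact h2 i hmem hpair
    rw [mem_link]
    refine ⟨mem_crossC.mpr ⟨hFs, hFK⟩, hdis, mem_crossC.mpr ⟨?_, ?_⟩⟩
    · intro x hx
      rw [Finset.mem_union] at hx
      rcases hx with hx|hx
      · exact hFs x hx
      · exact hσ'.1 x hx
    · intro i hi hpair
      obtain ⟨hp1, hp2⟩ := hpair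
      rw [Finset.mem_union] at hp1 hp2
      rcases hp1 with h1'|h1' <;> rcases hp2 with h2'|h2'
      · exact hFK i hi ⟨h1', h2'⟩
      · have hmem := h1 _ h1'
        have e : (2*i)/2 = i := by omega
        rw [e] at hmem
        exact (Finset.mem_filter.mp hmem).2.2 h2'
      · have hmem := h1 _ h2'
        have e : (2*i+1)/2 = i := by omega
        rw [e] at hmem
        exact (Finset.mem_filter.mp hmem).2.1 h1'
      · exact hσ'.2 i hi ⟨h1', h2'⟩

lemma card_free {s σ : Finset ℕ} (hσ : σ ∈ crossC s) :
    (s.filter fun i => ¬(2*i ∈ σ) ∧ ¬(2*i+1 ∈ σ)).card = s.card - σ.card := by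
  have hσ' := mem_crossC.mp hσ
  have hused : σ.card = (s.filter fun i => ¬(¬(2*i ∈ σ) ∧ ¬(2*i+1 ∈ σ))).card := by
    apply Finset.card_bij (fun x _ => x / 2)
    · intro x hx
      rw [Finset.mem_filter]
      refine ⟨hσ'.1 x hx, ?_⟩
      push_neg
      intro h
      have hx2 : x = 2*(x/2) ∨ x = 2*(x/2)+1 := by omega
      rcases hx2 with hh|hh
      · exact absurd (hh ▸ hx) h
      · exact hh ▸ hx
    · intro x hx y hy hxy
      by_contra hne
      have hi : x / 2 ∈ s := hσ'.1 x hx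
      have : (2 * (x/2) ∈ σ ∧ 2 * (x/2) + 1 ∈ σ) := by
        have hx2 : x = 2 * (x/2) ∨ x = 2 * (x/2) + 1 := by omega
        have hy2 : y = 2 * (x/2) ∨ y = 2 * (x/2) + 1 := by omega
        rcases hx2 with h|h <;> rcases hy2 with h'|h'
        · exact absurd (by omega : x = y) hne
        · exact ⟨h ▸ hx, h' ▸ hy⟩
        · exact ⟨h' ▸ hy, h ▸ hx⟩
        · exact absurd (by omega : x = y) hne
      exact hσ'.2 _ hi this
    · intro i hi
      rw [Finset.mem_filter] at hi
      have := hi.2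
      push_neg at this
      by_cases h : 2*i ∈ σ
      · exact ⟨2*i, h, by omega⟩
      · exact ⟨2*i+1, this h, by omega⟩
  have := Finset.card_filter_add_card_filter_not
    (s := s) (p := fun i => ¬(2*i ∈ σ) ∧ ¬(2*i+1 ∈ σ))
  omega


lemma mem_stellar {V : Type*} [DecidableEq V] {K : Finset (Finset V)} {e : Finset V} {w : V}
    {T : Finset V} :
    T ∈ stellarSub K e w ↔
      (T ∈ K ∧ ¬ e ⊆ T) ∨ ∃ F ∈ link K e, ∃ S ∈ e.ssubsets, F ∪ S ∪ {w} = T := by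
  simp [stellarSub]

lemma link_face_card {K : Finset (Finset ℕ)} {e F : Finset ℕ} {m : ℕ}
    (hcard : ∀ F ∈ K, F.card ≤ m) (hF : F ∈ link K e) : F.card + e.card ≤ m := by
  rw [mem_link] at hF
  have := hcard _ hF.2.2
  rwa [Finset.card_union_of_disjoint hF.2.1] at this

lemma isComplex_stellar {K : Finset (Finset ℕ)} {e : Finset ℕ} {w : ℕ}
    (hcplx : IsComplex K) : IsComplex (stellarSub K e w) := by
  intro T hT G hG
  rw [mem_stellar] at hT ⊢
  rcases hT with ⟨hTK, hTe⟩ | ⟨F, hF, S, hS, rfl⟩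
  · exact Or.inl ⟨hcplx T hTK G hG, fun h => hTe (h.trans hG)⟩
  · rw [Finset.mem_ssubsets] at hS
    have hFl := mem_link.mp hF
    by_cases hwG : w ∈ G
    · right
      refine ⟨G ∩ F, (isComplex_link hcplx e) F hF _ Finset.inter_subset_right,
        G ∩ S, Finset.mem_ssubsets.mpr (lt_of_le_of_lt Finset.inter_subset_right hS), ?_⟩
      ext x
      simp only [Finset.mem_union, Finset.mem_inter, Finset.mem_singleton]
      constructor
      · rintro ((⟨h1,h2⟩|⟨h1,h2⟩)|rfl)
        · exact h1
        · exact h1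
        · exact hwG
      · intro hx
        have := hG hx
        simp only [Finset.mem_union, Finset.mem_singleton] at this
        rcases this with (h|h)|h
        · exact Or.inl (Or.inl ⟨hx, h⟩)
        · exact Or.inl (Or.inr ⟨hx, h⟩)
        · exact Or.inr h
    · left
      have hGFS : G ⊆ F ∪ S := by
        intro x hx
        have := hG hx
        simp only [Finset.mem_union, Finset.mem_singleton] at this
        rcases this with (h|h)|h
        · exact Finset.mem_union_left _ h
        · exact Finset.mem_union_right _ h
        · exact absurd (h ▸ hx) hwG
      have hFSK : F ∪ S ∈ K := by
        apply hcplx _ hFl.2.2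
        exact Finset.union_subset_union_right hS.subset
      refine ⟨hcplx _ hFSK _ hGFS, ?_⟩
      intro hsub
      have heS : e ⊆ S := by
        intro x hx
        have := hGFS (hsub hx)
        rw [Finset.mem_union] at this
        rcases this with h|h
        · exact absurd hx (Finset.disjoint_left.mp hFl.2.1 h)
        · exact h
      exact (Finset.ssubset_iff_subset_ne.mp hS).2 (Finset.Subset.antisymm hS.subset heS)

lemma card_stellar {K : Finset (Finset ℕ)} {e : Finset ℕ} {w : ℕ} {n : ℕ}
    (hcard : ∀ F ∈ K, F.card ≤ n) (he2 : e.card = 2) :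
    ∀ T ∈ stellarSub K e w, T.card ≤ n := by
  intro T hT
  rw [mem_stellar] at hT
  rcases hT with ⟨hTK, -⟩ | ⟨F, hF, S, hS, rfl⟩
  · exact hcard _ hTK
  · rw [Finset.mem_ssubsets] at hS
    have h1 : F.card + 2 ≤ n := by
      have := link_face_card hcard hF
      omega
    have h2 : S.card < 2 := he2 ▸ Finset.card_lt_card hS
    calc (F ∪ S ∪ {w}).card ≤ (F ∪ S).card + ({w} : Finset ℕ).card := Finset.card_union_le _ _
      _ ≤ F.card + S.card + 1 := by
          have := Finset.card_union_le F S
          simp only [Finset.card_singleton]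
          omega
      _ ≤ n := by omega

lemma stellar_eq_union {K : Finset (Finset ℕ)} {e : Finset ℕ} {w : ℕ} :
    stellarSub K e w = (K.filter fun F => ¬ e ⊆ F) ∪
      (((link K e) ×ˢ e.ssubsets).image fun p => p.1 ∪ p.2).image (insert w) := by
  unfold stellarSub
  congr 1
  ext T
  simp only [Finset.mem_biUnion, Finset.mem_image, Finset.mem_product, Prod.exists]
  constructor
  · rintro ⟨F, hF, S, hS, rfl⟩
    exact ⟨F ∪ S, ⟨F, S, ⟨hF, hS⟩, rfl⟩, by ext x; simp⟩
  · rintro ⟨T', ⟨F, S, ⟨hF, hS⟩, rfl⟩, rfl⟩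
    exact ⟨F, hF, S, hS, by ext x; simp⟩

lemma hPoly_stellar {K : Finset (Finset ℕ)} {a b w : ℕ} {m : ℕ}
    (hcplx : IsComplex K) (hab : a ≠ b) (he : ({a, b} : Finset ℕ) ∈ K)
    (hw : ∀ F ∈ K, w ∉ F) (hcard : ∀ F ∈ K, F.card ≤ m) :
    hPoly (stellarSub K {a, b} w) m
      = hPoly K m + X * hPoly (link K {a, b}) (m - 2) := by
  set e : Finset ℕ := {a, b} with hedef
  have he2 : e.card = 2 := Finset.card_pair hab
  have hm2 : 2 ≤ m := he2 ▸ hcard _ he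
  have hwe : w ∉ e := hw _ he
  have hlinkab : ∀ G ∈ link K e, a ∉ G ∧ b ∉ G := by
    intro G hG
    have := (mem_link.mp hG).2.1
    constructor
    · exact fun h => Finset.disjoint_left.mp this h (by simp [hedef])
    · exact fun h => Finset.disjoint_left.mp this h (by simp [hedef])
  have hlinkcard : ∀ G ∈ link K e, G.card ≤ m - 2 := by
    intro G hG
    have := link_face_card hcard hG
    omega
  set B0 : Finset (Finset ℕ) := ((link K e) ×ˢ e.ssubsets).image fun p => p.1 ∪ p.2 with hB0
  have hB0w : ∀ T ∈ B0, w ∉ T := by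
    intro T hT
    obtain ⟨p, hp, rfl⟩ := Finset.mem_image.mp hT
    rw [Finset.mem_product, Finset.mem_ssubsets] at hp
    rw [Finset.mem_union]
    push_neg
    exact ⟨hw _ (mem_link.mp hp.1).1, fun h => hwe (hp.2.subset h)⟩
  have hsplit := stellar_eq_union (K := K) (e := e) (w := w)
  have hdisj : Disjoint (K.filter fun F => ¬ e ⊆ F) (B0.image (insert w)) := by
    rw [Finset.disjoint_left]
    intro T hT hT'
    obtain ⟨T', hT', rfl⟩ := Finset.mem_image.mp hT'
    exact hw _ (Finset.mem_filter.mp hT).1 (Finset.mem_insert_self w T')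
  -- the part of K containing e
  have hcontain : K.filter (fun F => e ⊆ F) = (link K e).image (· ∪ e) := by
    ext T
    rw [Finset.mem_filter, Finset.mem_image]
    constructor
    · rintro ⟨hTK, hTe⟩
      refine ⟨T \ e, mem_link.mpr ⟨hcplx _ hTK _ Finset.sdiff_subset, Finset.sdiff_disjoint, ?_⟩, ?_⟩
      · rwa [Finset.sdiff_union_of_subset hTe]
      · rw [Finset.sdiff_union_of_subset hTe]
    · rintro ⟨G, hG, rfl⟩
      exact ⟨(mem_link.mp hG).2.2, Finset.subset_union_right⟩
  have hKsplit : (∑ F ∈ K.filter (fun F => e ⊆ F), (X:ℤ[X]) ^ F.card * (1-X) ^ (m - F.card))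
      + (∑ F ∈ K.filter (fun F => ¬ e ⊆ F), (X:ℤ[X]) ^ F.card * (1-X) ^ (m - F.card)) = hPoly K m :=
    Finset.sum_filter_add_sum_filter_not K _ _
  have hcontain_sum : (∑ F ∈ K.filter (fun F => e ⊆ F), (X:ℤ[X]) ^ F.card * (1-X) ^ (m - F.card))
      = X ^ 2 * hPoly (link K e) (m - 2) := by
    rw [hcontain, Finset.sum_image]
    · unfold hPoly
      rw [Finset.mul_sum]
      apply Finset.sum_congr rfl
      intro G hG
      have hd := (mem_link.mp hG).2.1
      rw [Finset.card_union_of_disjoint hd, he2]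
      have h1 : m - (G.card + 2) = m - 2 - G.card := by omega
      rw [h1, pow_add]
      ring
    · intro p hp q hq heq
      have h1 : p = (p ∪ e) \ e := by
        rw [Finset.union_sdiff_right, Finset.sdiff_eq_self_of_disjoint (mem_link.mp hp).2.1]
      rw [h1, show p ∪ e = q ∪ e from heq, Finset.union_sdiff_right,
        Finset.sdiff_eq_self_of_disjoint (mem_link.mp hq).2.1]
  have hB_sum : (∑ T ∈ B0.image (insert w), (X:ℤ[X]) ^ T.card * (1-X) ^ (m - T.card))
      = X * ((1 + X) * hPoly (link K e) (m - 2)) := by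
    rw [Finset.sum_image]
    · have : ∀ T ∈ B0, (X:ℤ[X]) ^ (insert w T).card * (1-X) ^ (m - (insert w T).card)
          = X * (X ^ T.card * (1-X) ^ ((m-1) - T.card)) := by
        intro T hT
        rw [Finset.card_insert_of_notMem (hB0w T hT)]
        have h1 : m - (T.card + 1) = m - 1 - T.card := by omega
        rw [h1, pow_succ]
        ring
      rw [Finset.sum_congr rfl this, ← Finset.mul_sum]
      congr 1
      have hm1 : m - 1 = (m - 2) + 1 := by omega
      rw [hm1]
      exact hPoly_joinPair (link K e) a b hab hlinkab (m-2) hlinkcard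
    · intro T hT T' hT' heq
      have h1 : T = (insert w T).erase w := by
        rw [Finset.erase_insert (hB0w T hT)]
      rw [h1, heq, Finset.erase_insert (hB0w T' hT')]
  have hA : (∑ F ∈ K.filter (fun F => ¬ e ⊆ F), (X:ℤ[X]) ^ F.card * (1-X) ^ (m - F.card))
      = hPoly K m - X ^ 2 * hPoly (link K e) (m-2) := by
    rw [← hcontain_sum]
    exact eq_sub_of_add_eq' hKsplit
  have main : hPoly (stellarSub K e w) m
      = (∑ F ∈ K.filter (fun F => ¬ e ⊆ F), (X:ℤ[X]) ^ F.card * (1-X) ^ (m - F.card))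
        + (∑ T ∈ B0.image (insert w), (X:ℤ[X]) ^ T.card * (1-X) ^ (m - T.card)) := by
    unfold hPoly
    rw [hsplit]
    exact Finset.sum_union hdisj
  rw [main, hA, hB_sum]
  ring


section L12
variable {K : Finset (Finset ℕ)} {e σ : Finset ℕ} {w : ℕ}
  (hcplx : IsComplex K) (hw : ∀ F ∈ K, w ∉ F)

include hcplx hw

lemma linkL1 (hσK : σ ∈ K) (hd : Disjoint σ e) (hcup : e ∪ σ ∈ K) :
    link (stellarSub K e w) σ = stellarSub (link K σ) e w := by
  have hlink2 : link (link K σ) e = link K (e ∪ σ) := by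
    ext G
    simp only [mem_link]
    constructor
    · rintro ⟨⟨hG, hGσ, hGσK⟩, hGe, ⟨_, hGeσ, hGeσK⟩⟩
      rw [Finset.union_assoc] at hGeσK
      exact ⟨hG, by rw [Finset.disjoint_union_right]; exact ⟨hGe, hGσ⟩, hGeσK⟩
    · rintro ⟨hG, hdis, hU⟩
      rw [Finset.disjoint_union_right] at hdis
      refine ⟨⟨hG, hdis.2, hcplx _ hU _ ?_⟩, hdis.1, ⟨hcplx _ hU _ ?_, ?_, ?_⟩⟩
      · intro y hy; simp only [Finset.mem_union] at *; tauto
      · intro y hy; simp only [Finset.mem_union] at *; tauto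
      · rw [Finset.disjoint_union_left]; exact ⟨hdis.2, hd.symm⟩
      · rw [Finset.union_assoc]; exact hU
  ext T
  constructor
  · intro hTmem
    obtain ⟨hT, hTσ, hTσ'⟩ := mem_link.mp hTmem
    rw [mem_stellar, hlink2]
    rcases mem_stellar.mp hTσ' with ⟨hTσK, hTσe⟩ | ⟨F', hF', S, hS, heq⟩
    · left
      exact ⟨mem_link.mpr ⟨hcplx _ hTσK _ Finset.subset_union_left, hTσ, hTσK⟩,
        fun h => hTσe (h.trans Finset.subset_union_left)⟩
    · right
      obtain ⟨hF'K, hF'e, hF'eK⟩ := mem_link.mp hF'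
      have hwσ : w ∉ σ := hw _ hσK
      have hSe : S ⊆ e := (Finset.mem_ssubsets.mp hS).subset
      have hσF' : σ ⊆ F' := by
        intro x hx
        have hx' : x ∈ F' ∪ S ∪ {w} := heq ▸ Finset.mem_union_right _ hx
        simp only [Finset.mem_union, Finset.mem_singleton] at hx'
        rcases hx' with (h|h)|h
        · exact h
        · exact absurd hx (Finset.disjoint_left.mp hd.symm (hSe h)).elim
        · exact absurd (h ▸ hx) hwσ
      refine ⟨F' \ σ, mem_link.mpr ⟨hcplx _ hF'K _ Finset.sdiff_subset, ?_, ?_⟩, S, hS, ?_⟩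
      · rw [Finset.disjoint_union_right]
        refine ⟨Finset.disjoint_of_subset_left Finset.sdiff_subset hF'e, Finset.sdiff_disjoint⟩
      · have : F' \ σ ∪ (e ∪ σ) = F' ∪ e := by
          ext x
          simp only [Finset.mem_union, Finset.mem_sdiff]
          constructor
          · rintro (⟨h,-⟩|h|h)
            · exact Or.inl h
            · exact Or.inr h
            · exact Or.inl (hσF' h)
          · rintro (h|h)
            · by_cases hxσ : x ∈ σ
              · exact Or.inr (Or.inr hxσ)
              · exact Or.inl ⟨h, hxσ⟩
            · exact Or.inr (Or.inl h)
        rw [this]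
        exact hF'eK
      · -- F' \ σ ∪ S ∪ {w} = T
        have h1 : T = (T ∪ σ) \ σ := by
          rw [Finset.union_sdiff_right, Finset.sdiff_eq_self_of_disjoint hTσ]
        have h2 : (F' ∪ S ∪ {w}) \ σ = F' \ σ ∪ S ∪ {w} := by
          rw [Finset.union_sdiff_distrib, Finset.union_sdiff_distrib,
            Finset.sdiff_eq_self_of_disjoint (Finset.disjoint_of_subset_left hSe hd.symm),
            Finset.sdiff_eq_self_of_disjoint (Finset.disjoint_singleton_left.mpr hwσ)]
        rw [h1, ← heq, h2]
  · intro hTmem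
    rw [mem_stellar, hlink2] at hTmem
    rw [mem_link]
    rcases hTmem with ⟨hTl, hTe⟩ | ⟨F, hF, S, hS, rfl⟩
    · obtain ⟨hTK, hTσd, hTσK⟩ := mem_link.mp hTl
      refine ⟨mem_stellar.mpr (Or.inl ⟨hTK, hTe⟩), hTσd, mem_stellar.mpr (Or.inl ⟨hTσK, ?_⟩)⟩
      intro h
      apply hTe
      intro x hx
      have := h hx
      rw [Finset.mem_union] at this
      rcases this with h'|h'
      · exact h'
      · exact absurd h' (Finset.disjoint_left.mp hd.symm hx)
    · obtain ⟨hFK, hFd, hFU⟩ := mem_link.mp hF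
      rw [Finset.disjoint_union_right] at hFd
      have hSe : S ⊆ e := (Finset.mem_ssubsets.mp hS).subset
      have hwσ : w ∉ σ := hw _ hσK
      have hFe : F ∈ link K e := by
        refine mem_link.mpr ⟨hFK, hFd.1, hcplx _ hFU _ ?_⟩
        intro x hx
        simp only [Finset.mem_union] at *
        tauto
      refine ⟨mem_stellar.mpr (Or.inr ⟨F, hFe, S, hS, rfl⟩), ?_,
        mem_stellar.mpr (Or.inr ⟨F ∪ σ, ?_, S, hS, ?_⟩)⟩
      · rw [Finset.disjoint_union_left, Finset.disjoint_union_left]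
        refine ⟨⟨hFd.2, Finset.disjoint_of_subset_left hSe hd.symm⟩, ?_⟩
        simp [hwσ]
      · refine mem_link.mpr ⟨hcplx _ hFU _ ?_, ?_, ?_⟩
        · intro x hx; simp only [Finset.mem_union] at *; tauto
        · rw [Finset.disjoint_union_left]
          exact ⟨hFd.1, hd⟩
        · have : F ∪ σ ∪ e = F ∪ (e ∪ σ) := by
            ext x; simp only [Finset.mem_union]; tauto
          rw [this]; exact hFU
      · ext x
        simp only [Finset.mem_union, Finset.mem_singleton]
        tauto

lemma linkL2 (hσK : σ ∈ K) (hd : Disjoint σ e) (hcup : e ∪ σ ∉ K) :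
    link (stellarSub K e w) σ = link K σ := by
  ext T
  rw [mem_link, mem_link]
  constructor
  · rintro ⟨hT, hTσ, hTσ'⟩
    rcases mem_stellar.mp hTσ' with ⟨hTσK, hTσe⟩ | ⟨F', hF', S, hS, heq⟩
    · exact ⟨hcplx _ hTσK _ Finset.subset_union_left, hTσ, hTσK⟩
    · exfalso
      obtain ⟨hF'K, hF'e, hF'eK⟩ := mem_link.mp hF'
      have hwσ : w ∉ σ := hw _ hσK
      have hSe : S ⊆ e := (Finset.mem_ssubsets.mp hS).subset
      have hσF' : σ ⊆ F' := by
        intro x hx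
        have hx' : x ∈ F' ∪ S ∪ {w} := heq ▸ Finset.mem_union_right _ hx
        simp only [Finset.mem_union, Finset.mem_singleton] at hx'
        rcases hx' with (h|h)|h
        · exact h
        · exact absurd hx (Finset.disjoint_left.mp hd.symm (hSe h)).elim
        · exact absurd (h ▸ hx) hwσ
      apply hcup
      apply hcplx _ hF'eK
      intro x hx
      rw [Finset.mem_union] at hx ⊢
      rcases hx with h|h
      · exact Or.inr h
      · exact Or.inl (hσF' h)
  · rintro ⟨hTK, hdis, hTσK⟩
    have h1 : ¬ e ⊆ T := by
      intro h
      exact hcup (hcplx _ hTσK _ (Finset.union_subset (h.trans Finset.subset_union_left)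
        Finset.subset_union_right))
    have h2 : ¬ e ⊆ T ∪ σ := by
      intro h
      exact hcup (hcplx _ hTσK _ (Finset.union_subset h Finset.subset_union_right))
    exact ⟨mem_stellar.mpr (Or.inl ⟨hTK, h1⟩), hdis, mem_stellar.mpr (Or.inl ⟨hTσK, h2⟩)⟩

end L12

section L3
variable {K : Finset (Finset ℕ)} {a b w : ℕ} {σ : Finset ℕ}
  (hcplx : IsComplex K) (hw : ∀ F ∈ K, w ∉ F)

lemma hPoly_relabel {L : Finset (Finset ℕ)} {b w : ℕ} {m : ℕ} (hwL : ∀ G ∈ L, w ∉ G) :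
    hPoly (L.image fun G => if b ∈ G then insert w (G.erase b) else G) m = hPoly L m := by
  unfold hPoly
  rw [Finset.sum_image]
  · apply Finset.sum_congr rfl
    intro G hG
    have hcard : (if b ∈ G then insert w (G.erase b) else G).card = G.card := by
      split_ifs with hbG
      · rw [Finset.card_insert_of_notMem (fun h => hwL G hG (Finset.mem_of_mem_erase h)),
          Finset.card_erase_of_mem hbG]
        have : 0 < G.card := Finset.card_pos.mpr ⟨b, hbG⟩
        omega
      · rfl
    rw [hcard]
  · intro p hp q hq heq
    simp only at heq
    by_cases hbp : b ∈ p <;> by_cases hbq : b ∈ q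
    · rw [if_pos hbp, if_pos hbq] at heq
      have h1 : p.erase b = q.erase b := by
        have hwp : w ∉ p.erase b := fun h => hwL p hp (Finset.mem_of_mem_erase h)
        have hwq : w ∉ q.erase b := fun h => hwL q hq (Finset.mem_of_mem_erase h)
        rw [← Finset.erase_insert hwp, heq, Finset.erase_insert hwq]
      rw [← Finset.insert_erase hbp, h1, Finset.insert_erase hbq]
    · rw [if_pos hbp, if_neg hbq] at heq
      exact absurd (heq ▸ Finset.mem_insert_self w _) (hwL q hq)
    · rw [if_neg hbp, if_pos hbq] at heq
      exact absurd (heq ▸ Finset.mem_insert_self w _ : w ∈ p) (hwL p hp)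
    · rwa [if_neg hbp, if_neg hbq] at heq

include hcplx hw

lemma linkL3 (hab : a ≠ b) (he : ({a, b} : Finset ℕ) ∈ K) (hσK : σ ∈ K)
    (ha : a ∈ σ) (hb : b ∉ σ) :
    link (stellarSub K {a, b} w) σ
      = (link K σ).image fun G => if b ∈ G then insert w (G.erase b) else G := by
  set e : Finset ℕ := {a, b} with hedef
  have hwe : w ∉ e := hw _ he
  have hwa : w ≠ a := fun h => hwe (by simp [hedef, h])
  have hwb : w ≠ b := fun h => hwe (by simp [hedef, h])
  have hwσ : w ∉ σ := hw _ hσK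
  ext T
  constructor
  · intro hTmem
    obtain ⟨hT, hTσ, hTσ'⟩ := mem_link.mp hTmem
    rw [Finset.mem_image]
    rcases mem_stellar.mp hTσ' with ⟨hTσK, hTσe⟩ | ⟨F', hF', S, hS, heq⟩
    · -- b ∉ T ∪ σ
      have hbT : b ∉ T := by
        intro h
        apply hTσe
        intro x hx
        simp only [hedef, Finset.mem_insert, Finset.mem_singleton] at hx
        rcases hx with rfl|rfl
        · exact Finset.mem_union_right _ ha
        · exact Finset.mem_union_left _ h
      exact ⟨T, mem_link.mpr ⟨hcplx _ hTσK _ Finset.subset_union_left, hTσ, hTσK⟩,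
        by rw [if_neg hbT]⟩
    · obtain ⟨hF'K, hF'e, hF'eK⟩ := mem_link.mp hF'
      have hSe : S ⊆ e := (Finset.mem_ssubsets.mp hS).subset
      have hSne : S ≠ e := (Finset.ssubset_iff_subset_ne.mp (Finset.mem_ssubsets.mp hS)).2
      -- a ∈ S
      have haS : a ∈ S := by
        have : a ∈ F' ∪ S ∪ {w} := heq ▸ Finset.mem_union_right _ ha
        simp only [Finset.mem_union, Finset.mem_singleton] at this
        rcases this with (h|h)|h
        · exact absurd (by simp [hedef] : a ∈ e) (Finset.disjoint_left.mp hF'e h)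
        · exact h
        · exact absurd h.symm hwa
      have hbS : b ∉ S := by
        intro h
        apply hSne
        apply Finset.Subset.antisymm hSe
        intro x hx
        simp only [hedef, Finset.mem_insert, Finset.mem_singleton] at hx
        rcases hx with rfl|rfl
        · exact haS
        · exact h
      -- σ ⊆ F' ∪ {a} and T = (F' \ σ) ∪ {w}
      have hσF' : ∀ x ∈ σ, x ≠ a → x ∈ F' := by
        intro x hx hxa
        have : x ∈ F' ∪ S ∪ {w} := heq ▸ Finset.mem_union_right _ hx
        simp only [Finset.mem_union, Finset.mem_singleton] at this
        rcases this with (h|h)|h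
        · exact h
        · exfalso
          have hxe := hSe h
          simp only [hedef, Finset.mem_insert, Finset.mem_singleton] at hxe
          rcases hxe with rfl|rfl
          · exact hxa rfl
          · exact hb hx
        · exact absurd (h ▸ hx) hwσ
      have hbF' : b ∉ F' := fun h => Finset.disjoint_left.mp hF'e h (by simp [hedef])
      set H : Finset ℕ := F' \ σ with hHdef
      have hbH : b ∉ H := fun h => hbF' (Finset.mem_sdiff.mp h).1
      have hwH : w ∉ H := fun h => hw _ hF'K (Finset.mem_sdiff.mp h).1
      have hSa : S = {a} := by
        apply Finset.Subset.antisymm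
        · intro x hx
          have hxe := hSe hx
          simp only [hedef, Finset.mem_insert, Finset.mem_singleton] at hxe
          rcases hxe with rfl|rfl
          · simp
          · exact absurd hx hbS
        · simpa using haS
      have hHσ : H ∪ σ = F' ∪ {a} := by
        ext x
        simp only [hHdef, Finset.mem_union, Finset.mem_sdiff, Finset.mem_singleton]
        constructor
        · rintro (⟨h,-⟩|h)
          · exact Or.inl h
          · by_cases hxa : x = a
            · exact Or.inr hxa
            · exact Or.inl (hσF' x h hxa)
        · rintro (h|rfl)
          · by_cases hxσ : x ∈ σ
            · exact Or.inr hxσ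
            · exact Or.inl ⟨h, hxσ⟩
          · exact Or.inr ha
      have hkey : insert b H ∪ σ = F' ∪ e := by
        rw [Finset.insert_union, hHσ]
        ext x
        simp only [hedef, Finset.mem_insert, Finset.mem_union, Finset.mem_singleton]
        tauto
      have hT' : T = insert w H := by
        have h1 : T = (T ∪ σ) \ σ := by
          rw [Finset.union_sdiff_right, Finset.sdiff_eq_self_of_disjoint hTσ]
        rw [h1, ← heq, hSa]
        ext x
        simp only [hHdef, Finset.mem_sdiff, Finset.mem_union, Finset.mem_singleton,
          Finset.mem_insert]
        constructor
        · rintro ⟨(h|rfl)|rfl, hxσ⟩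
          · exact Or.inr ⟨h, hxσ⟩
          · exact absurd ha hxσ
          · exact Or.inl rfl
        · rintro (rfl|⟨h1', h2'⟩)
          · exact ⟨Or.inr rfl, hwσ⟩
          · exact ⟨Or.inl (Or.inl h1'), h2'⟩
      refine ⟨insert b H, mem_link.mpr ⟨?_, ?_, ?_⟩, ?_⟩
      · exact hcplx _ (hkey ▸ hF'eK) _ Finset.subset_union_left
      · rw [Finset.disjoint_left]
        intro x hx hxσ
        rw [Finset.mem_insert] at hx
        rcases hx with rfl|hx
        · exact hb hxσ
        · exact (Finset.mem_sdiff.mp hx).2 hxσ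
      · rw [hkey]; exact hF'eK
      · rw [if_pos (Finset.mem_insert_self b H), Finset.erase_insert hbH, ← hT']
  · intro hTmem
    rw [Finset.mem_image] at hTmem
    obtain ⟨G, hG, rfl⟩ := hTmem
    obtain ⟨hGK, hGσ, hGσK⟩ := mem_link.mp hG
    have hwG : w ∉ G := hw _ hGK
    have haG : a ∉ G := fun h => Finset.disjoint_left.mp hGσ h ha
    by_cases hbG : b ∈ G
    · rw [if_pos hbG]
      set H := G.erase b with hHdef
      have hbH : b ∉ H := Finset.notMem_erase _ _
      have hwH : w ∉ H := fun h => hwG (Finset.mem_of_mem_erase h)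
      have haH : a ∉ H := fun h => haG (Finset.mem_of_mem_erase h)
      have hGH : G = insert b H := (Finset.insert_erase hbG).symm
      have hHe : H ∈ link K e := by
        refine mem_link.mpr ⟨hcplx _ hGK _ (Finset.erase_subset _ _), ?_, ?_⟩
        · rw [Finset.disjoint_right]
          intro x hx
          simp only [hedef, Finset.mem_insert, Finset.mem_singleton] at hx
          rcases hx with rfl|rfl
          · exact haH
          · exact hbH
        · apply hcplx _ hGσK
          intro x hx
          simp only [Finset.mem_union, hedef, Finset.mem_insert, Finset.mem_singleton] at hx ⊢
          rcases hx with h|rfl|rfl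
          · exact Or.inl (Finset.mem_of_mem_erase h)
          · exact Or.inr ha
          · exact Or.inl hbG
      refine mem_link.mpr ⟨?_, ?_, ?_⟩
      · apply mem_stellar.mpr
        right
        refine ⟨H, hHe, ∅, ?_, ?_⟩
        · rw [Finset.mem_ssubsets]
          exact Finset.empty_ssubset.mpr (by simp [hedef])
        · ext x; simp
      · rw [Finset.disjoint_left]
        intro x hx hxσ
        simp only [Finset.mem_insert] at hx
        rcases hx with rfl|hx
        · exact hwσ hxσ
        · exact Finset.disjoint_left.mp hGσ (Finset.mem_of_mem_erase hx) hxσ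
      · apply mem_stellar.mpr
        right
        refine ⟨H ∪ σ.erase a, mem_link.mpr ⟨?_, ?_, ?_⟩, {a}, ?_, ?_⟩
        · apply hcplx _ hGσK
          intro x hx
          rw [Finset.mem_union] at hx ⊢
          rcases hx with h|h
          · exact Or.inl (Finset.mem_of_mem_erase h)
          · exact Or.inr (Finset.mem_of_mem_erase h)
        · rw [Finset.disjoint_right]
          intro x hx
          simp only [hedef, Finset.mem_insert, Finset.mem_singleton] at hx
          rw [Finset.mem_union]
          push_neg
          rcases hx with rfl|rfl
          · exact ⟨haH, Finset.notMem_erase _ _⟩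
          · exact ⟨hbH, fun h => hb (Finset.mem_of_mem_erase h)⟩
        · have heq2 : H ∪ σ.erase a ∪ e = G ∪ σ := by
            rw [hGH, hedef]
            ext x
            simp only [Finset.mem_union, Finset.mem_insert, Finset.mem_singleton,
              Finset.mem_erase]
            constructor
            · rintro ((h|⟨-,h⟩)|rfl|rfl)
              · exact Or.inl (Or.inr h)
              · exact Or.inr h
              · exact Or.inr ha
              · exact Or.inl (Or.inl rfl)
            · rintro ((rfl|h)|h)
              · exact Or.inr (Or.inr rfl)
              · exact Or.inl (Or.inl h)
              · by_cases hxa : x = a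
                · exact Or.inr (Or.inl hxa)
                · exact Or.inl (Or.inr ⟨hxa, h⟩)
          rw [heq2]
          exact hGσK
        · rw [Finset.mem_ssubsets, Finset.ssubset_iff_subset_ne]
          constructor
          · simp [hedef]
          · intro h
            have hbmem : b ∈ e := by simp [hedef]
            rw [← h] at hbmem
            simp at hbmem
            exact hab hbmem.symm
        · ext x
          simp only [Finset.mem_union, Finset.mem_insert, Finset.mem_singleton,
            Finset.mem_erase]
          constructor
          · rintro (((h|⟨-,h⟩)|rfl)|rfl)
            · exact Or.inl (Or.inr h)
            · exact Or.inr h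
            · exact Or.inr ha
            · exact Or.inl (Or.inl rfl)
          · rintro ((rfl|h)|h)
            · exact Or.inr rfl
            · exact Or.inl (Or.inl (Or.inl h))
            · by_cases hxa : x = a
              · exact Or.inl (Or.inr hxa)
              · exact Or.inl (Or.inl (Or.inr ⟨hxa, h⟩))
    · rw [if_neg hbG]
      have hbGσ : ¬ e ⊆ G ∪ σ := by
        intro h
        have := h (by simp [hedef] : b ∈ e)
        rw [Finset.mem_union] at this
        tauto
      exact mem_link.mpr ⟨mem_stellar.mpr (Or.inl ⟨hGK,
          fun h => hbG (h (by simp [hedef]))⟩), hGσ,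
        mem_stellar.mpr (Or.inl ⟨hGσK, hbGσ⟩)⟩

end L3

section L45
variable {K : Finset (Finset ℕ)} {e : Finset ℕ} {w : ℕ}
  (hcplx : IsComplex K) (hw : ∀ F ∈ K, w ∉ F)

include hcplx hw

lemma linkL4 {F : Finset ℕ} (he : e ∈ K) (hF : F ∈ link K e) :
    link (stellarSub K e w) (insert w F)
      = ((link K (e ∪ F)) ×ˢ e.ssubsets).image fun p => p.1 ∪ p.2 := by
  obtain ⟨hFK, hFe, hFeK⟩ := mem_link.mp hF
  have hwF : w ∉ F := hw _ hFK
  have hwe : w ∉ e := hw _ he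
  ext T
  constructor
  · intro hTmem
    obtain ⟨hT, hTd, hTσ'⟩ := mem_link.mp hTmem
    have hwT : w ∉ T := fun h => Finset.disjoint_left.mp hTd h (Finset.mem_insert_self _ _)
    have hTF : Disjoint T F :=
      Finset.disjoint_of_subset_right (Finset.subset_insert _ _) hTd
    have hTK : T ∈ K := by
      rcases mem_stellar.mp hT with ⟨h, -⟩ | ⟨F'', hF'', S'', hS'', heq⟩
      · exact h
      · exact absurd (heq ▸ Finset.mem_union_right _ (Finset.mem_singleton_self w)) hwT
    rcases mem_stellar.mp hTσ' with ⟨hTσK, -⟩ | ⟨F', hF', S', hS', heq⟩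
    · exact absurd (Finset.mem_union_right _ (Finset.mem_insert_self _ _)) (hw _ hTσK)
    · obtain ⟨hF'K, hF'e, hF'eK⟩ := mem_link.mp hF'
      have hS'e : S' ⊆ e := (Finset.mem_ssubsets.mp hS').subset
      have hTsub : T ⊆ F' ∪ S' := by
        intro y hy
        have : y ∈ F' ∪ S' ∪ {w} := heq ▸ Finset.mem_union_left _ hy
        simp only [Finset.mem_union, Finset.mem_singleton] at this
        rcases this with (h|h)|h
        · exact Finset.mem_union_left _ h
        · exact Finset.mem_union_right _ h
        · exact absurd (h ▸ hy) hwT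
      have hFF' : F ⊆ F' := by
        intro y hy
        have : y ∈ F' ∪ S' ∪ {w} :=
          heq ▸ Finset.mem_union_right _ (Finset.mem_insert_of_mem hy)
        simp only [Finset.mem_union, Finset.mem_singleton] at this
        rcases this with (h|h)|h
        · exact h
        · exact absurd (hS'e h) (Finset.disjoint_left.mp hFe hy)
        · exact absurd (h ▸ hy) hwF
      refine Finset.mem_image.mpr ⟨(T \ e, T ∩ e), Finset.mem_product.mpr ⟨?_, ?_⟩,
        Finset.sdiff_union_inter T e⟩
      · refine mem_link.mpr ⟨hcplx _ hTK _ Finset.sdiff_subset, ?_, ?_⟩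
        · rw [Finset.disjoint_union_right]
          exact ⟨Finset.sdiff_disjoint,
            Finset.disjoint_of_subset_left Finset.sdiff_subset hTF⟩
        · apply hcplx _ hF'eK
          intro y hy
          simp only [Finset.mem_union, Finset.mem_sdiff] at hy ⊢
          rcases hy with ⟨h1,h2⟩|h|h
          · have := hTsub h1
            rw [Finset.mem_union] at this
            rcases this with h|h
            · exact Or.inl h
            · exact absurd (hS'e h) h2
          · exact Or.inr h
          · exact Or.inl (hFF' h)
      · show T ∩ e ∈ Finset.ssubsets e
        rw [Finset.mem_ssubsets, Finset.ssubset_iff_subset_ne]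
        refine ⟨Finset.inter_subset_right, ?_⟩
        intro hcon
        have heT : e ⊆ T := by
          intro y hy
          have hyi : y ∈ T ∩ e := by rw [hcon]; exact hy
          exact (Finset.mem_inter.mp hyi).1
        have : e ⊆ S' := by
          intro y hy
          have := hTsub (heT hy)
          rw [Finset.mem_union] at this
          rcases this with h|h
          · exact absurd hy (Finset.disjoint_left.mp hF'e h)
          · exact h
        exact (Finset.ssubset_iff_subset_ne.mp (Finset.mem_ssubsets.mp hS')).2
          (Finset.Subset.antisymm hS'e this)
  · intro hTmem
    obtain ⟨p, hp, rfl⟩ := Finset.mem_image.mp hTmem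
    obtain ⟨hpG, hpS⟩ := Finset.mem_product.mp hp
    obtain ⟨hGK, hGd, hGU⟩ := mem_link.mp hpG
    rw [Finset.disjoint_union_right] at hGd
    have hSe : p.2 ⊆ e := (Finset.mem_ssubsets.mp hpS).subset
    have hSne := (Finset.ssubset_iff_subset_ne.mp (Finset.mem_ssubsets.mp hpS)).2
    have hwG : w ∉ p.1 := hw _ hGK
    have hwS : w ∉ p.2 := fun h => hwe (hSe h)
    refine mem_link.mpr ⟨?_, ?_, ?_⟩
    · apply mem_stellar.mpr
      left
      constructor
      · apply hcplx _ hGU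
        intro y hy
        rw [Finset.mem_union] at hy ⊢
        rcases hy with h|h
        · exact Or.inl h
        · exact Or.inr (Finset.mem_union_left _ (hSe h))
      · intro hcon
        have : e ⊆ p.2 := by
          intro y hy
          have := hcon hy
          rw [Finset.mem_union] at this
          rcases this with h|h
          · exact absurd hy (Finset.disjoint_left.mp hGd.1 h)
          · exact h
        exact hSne (Finset.Subset.antisymm hSe this)
    · rw [Finset.disjoint_left]
      intro y hy hyσ
      rw [Finset.mem_insert] at hyσ
      rw [Finset.mem_union] at hy
      rcases hyσ with rfl|hyF
      · rcases hy with h|h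
        · exact hwG h
        · exact hwS h
      · rcases hy with h|h
        · exact Finset.disjoint_left.mp hGd.2 h hyF
        · exact Finset.disjoint_left.mp hFe hyF (hSe h)
    · apply mem_stellar.mpr
      right
      refine ⟨p.1 ∪ F, mem_link.mpr ⟨?_, ?_, ?_⟩, p.2, hpS, ?_⟩
      · apply hcplx _ hGU
        intro y hy
        rw [Finset.mem_union] at hy ⊢
        rcases hy with h|h
        · exact Or.inl h
        · exact Or.inr (Finset.mem_union_right _ h)
      · rw [Finset.disjoint_union_left]
        exact ⟨hGd.1, hFe⟩
      · have : p.1 ∪ F ∪ e = p.1 ∪ (e ∪ F) := by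
          ext y; rw [Finset.mem_union, Finset.mem_union, Finset.mem_union, Finset.mem_union]
          tauto
        rw [this]
        exact hGU
      · ext y
        simp only [Finset.mem_union, Finset.mem_singleton, Finset.mem_insert]
        tauto

lemma linkL5 {F : Finset ℕ} {x : ℕ} (he : e ∈ K) (he2 : e.card = 2)
    (hF : F ∈ link K e) (hx : x ∈ e) :
    link (stellarSub K e w) (insert w (insert x F)) = link K (e ∪ F) := by
  obtain ⟨hFK, hFe, hFeK⟩ := mem_link.mp hF
  have hwF : w ∉ F := hw _ hFK
  have hwe : w ∉ e := hw _ he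
  have hwx : w ≠ x := fun h => hwe (h ▸ hx)
  have hxF : x ∉ F := fun h => Finset.disjoint_left.mp hFe h hx
  ext T
  constructor
  · intro hTmem
    obtain ⟨hT, hTd, hTσ'⟩ := mem_link.mp hTmem
    have hwT : w ∉ T := fun h => Finset.disjoint_left.mp hTd h (Finset.mem_insert_self _ _)
    have hxT : x ∉ T := fun h =>
      Finset.disjoint_left.mp hTd h (Finset.mem_insert_of_mem (Finset.mem_insert_self _ _))
    have hTF : Disjoint T F := by
      rw [Finset.disjoint_left]
      intro y hy hyF
      exact Finset.disjoint_left.mp hTd hy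
        (Finset.mem_insert_of_mem (Finset.mem_insert_of_mem hyF))
    have hTK : T ∈ K := by
      rcases mem_stellar.mp hT with ⟨h, -⟩ | ⟨F'', hF'', S'', hS'', heq⟩
      · exact h
      · exact absurd (heq ▸ Finset.mem_union_right _ (Finset.mem_singleton_self w)) hwT
    rcases mem_stellar.mp hTσ' with ⟨hTσK, -⟩ | ⟨F', hF', S', hS', heq⟩
    · exact absurd (Finset.mem_union_right _ (Finset.mem_insert_self _ _)) (hw _ hTσK)
    obtain ⟨hF'K, hF'e, hF'eK⟩ := mem_link.mp hF'
    have hS'e : S' ⊆ e := (Finset.mem_ssubsets.mp hS').subset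
    have hS'lt : S'.card < 2 := he2 ▸ Finset.card_lt_card (Finset.mem_ssubsets.mp hS')
    have hTsub : T ⊆ F' ∪ S' := by
      intro y hy
      have : y ∈ F' ∪ S' ∪ {w} := heq ▸ Finset.mem_union_left _ hy
      simp only [Finset.mem_union, Finset.mem_singleton] at this
      rcases this with (h|h)|h
      · exact Finset.mem_union_left _ h
      · exact Finset.mem_union_right _ h
      · exact absurd (h ▸ hy) hwT
    have hxS' : x ∈ S' := by
      have : x ∈ F' ∪ S' ∪ {w} := heq ▸ Finset.mem_union_right _
        (Finset.mem_insert_of_mem (Finset.mem_insert_self _ _))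
      simp only [Finset.mem_union, Finset.mem_singleton] at this
      rcases this with (h|h)|h
      · exact absurd hx (Finset.disjoint_left.mp hF'e h)
      · exact h
      · exact absurd h.symm hwx
    have hTe : Disjoint T e := by
      rw [Finset.disjoint_left]
      intro y hy hye
      have hyx : y ≠ x := fun h => hxT (h ▸ hy)
      have hyS' : y ∈ S' := by
        have := hTsub hy
        rw [Finset.mem_union] at this
        rcases this with h|h
        · exact absurd hye (Finset.disjoint_left.mp hF'e h)
        · exact h
      have hsub2 : ({x, y} : Finset ℕ) ⊆ S' := by
        intro z hz
        simp only [Finset.mem_insert, Finset.mem_singleton] at hz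
        rcases hz with rfl|rfl
        · exact hxS'
        · exact hyS'
      have : ({x, y} : Finset ℕ).card = 2 := Finset.card_pair (fun h => hyx h.symm)
      have := Finset.card_le_card hsub2
      omega
    have hTF' : T ⊆ F' := by
      intro y hy
      have := hTsub hy
      rw [Finset.mem_union] at this
      rcases this with h|h
      · exact h
      · exact absurd (hS'e h) (Finset.disjoint_left.mp hTe hy)
    have hFF' : F ⊆ F' := by
      intro y hy
      have : y ∈ F' ∪ S' ∪ {w} := heq ▸ Finset.mem_union_right _
        (Finset.mem_insert_of_mem (Finset.mem_insert_of_mem hy))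
      simp only [Finset.mem_union, Finset.mem_singleton] at this
      rcases this with (h|h)|h
      · exact h
      · exact absurd (hS'e h) (Finset.disjoint_left.mp hFe hy)
      · exact absurd (h ▸ hy) hwF
    refine mem_link.mpr ⟨hTK, ?_, ?_⟩
    · rw [Finset.disjoint_union_right]
      exact ⟨hTe, hTF⟩
    · apply hcplx _ hF'eK
      intro y hy
      simp only [Finset.mem_union] at hy ⊢
      rcases hy with h|h|h
      · exact Or.inl (hTF' h)
      · exact Or.inr h
      · exact Or.inl (hFF' h)
  · intro hTmem
    obtain ⟨hTK, hTd, hTU⟩ := mem_link.mp hTmem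
    rw [Finset.disjoint_union_right] at hTd
    have hwT : w ∉ T := hw _ hTK
    have hxT : x ∉ T := fun h => Finset.disjoint_left.mp hTd.1 h hx
    refine mem_link.mpr ⟨?_, ?_, ?_⟩
    · exact mem_stellar.mpr (Or.inl ⟨hTK, fun h => hxT (h hx)⟩)
    · rw [Finset.disjoint_left]
      intro y hy hyσ
      simp only [Finset.mem_insert] at hyσ
      rcases hyσ with rfl|rfl|hyF
      · exact hwT hy
      · exact hxT hy
      · exact Finset.disjoint_left.mp hTd.2 hy hyF
    · apply mem_stellar.mpr
      right
      refine ⟨T ∪ F, mem_link.mpr ⟨?_, ?_, ?_⟩, {x}, ?_, ?_⟩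
      · apply hcplx _ hTU
        intro y hy
        rw [Finset.mem_union] at hy ⊢
        rcases hy with h|h
        · exact Or.inl h
        · exact Or.inr (Finset.mem_union_right _ h)
      · rw [Finset.disjoint_union_left]
        exact ⟨hTd.1, hFe⟩
      · have hrw : T ∪ F ∪ e = T ∪ (e ∪ F) := by
          ext y; rw [Finset.mem_union, Finset.mem_union, Finset.mem_union, Finset.mem_union]
          tauto
        rw [hrw]
        exact hTU
      · rw [Finset.mem_ssubsets, Finset.ssubset_iff_subset_ne]
        refine ⟨by simpa using hx, ?_⟩
        intro hcon
        rw [← hcon] at he2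
        simp at he2
      · ext y
        simp only [Finset.mem_union, Finset.mem_singleton, Finset.mem_insert]
        tauto

end L45


/-- γ-nonnegativity of the h-polynomial of rank `m`. -/
def GammaNN (m : ℕ) (K : Finset (Finset ℕ)) : Prop :=
  ∃ γ : ℕ → ℕ, γ 0 = 1 ∧ hPoly K m = gexp γ m

/-- all links of faces (including the empty face) have γ-nonnegative h-polynomials. -/
def Good (n : ℕ) (K : Finset (Finset ℕ)) : Prop :=
  ∀ σ ∈ K, GammaNN (n - σ.card) (link K σ)

lemma gammaNN_of_pow {L : Finset (Finset ℕ)} {m : ℕ} (h : hPoly L m = (1+X)^m) : GammaNN m L :=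
  ⟨fun i => if i = 0 then 1 else 0, rfl, by rw [h, gexp_pow]⟩

lemma crossPolytopeBoundary_eq (n : ℕ) :
    crossPolytopeBoundary n = crossC (Finset.range n) := by
  unfold crossPolytopeBoundary crossC
  ext F
  rw [Finset.mem_filter, Finset.mem_filter, Finset.mem_powerset, Finset.mem_powerset]
  constructor
  · rintro ⟨h1, h2⟩
    refine ⟨?_, fun i hi => h2 i (Finset.mem_range.mp hi)⟩
    intro x hx
    have hx2 := h1 hx
    rw [Finset.mem_range] at hx2
    rw [Finset.mem_biUnion]
    refine ⟨x/2, Finset.mem_range.mpr (by omega), ?_⟩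
    simp only [Finset.mem_insert, Finset.mem_singleton]
    omega
  · rintro ⟨h1, h2⟩
    refine ⟨?_, fun i hi => h2 i (Finset.mem_range.mpr hi)⟩
    intro x hx
    have hx2 := h1 hx
    rw [Finset.mem_biUnion] at hx2
    obtain ⟨i, hi, hx3⟩ := hx2
    rw [Finset.mem_range] at hi ⊢
    simp only [Finset.mem_insert, Finset.mem_singleton] at hx3
    omega

lemma good_base (n : ℕ) : Good n (crossC (Finset.range n)) := by
  intro σ hσ
  rw [link_crossC hσ]
  have hc := card_free hσ
  rw [Finset.card_range] at hc
  apply gammaNN_of_pow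
  rw [← hc]
  exact hPoly_crossC _

lemma good_stellar {K : Finset (Finset ℕ)} {a b w : ℕ} {n : ℕ}
    (hcplx : IsComplex K) (hcard : ∀ F ∈ K, F.card ≤ n) (hg : Good n K)
    (hab : a ≠ b) (he : ({a, b} : Finset ℕ) ∈ K) (hw : ∀ F ∈ K, w ∉ F) :
    Good n (stellarSub K {a, b} w) := by
  have he2 : ({a, b} : Finset ℕ).card = 2 := Finset.card_pair hab
  intro σ hσ
  rcases mem_stellar.mp hσ with ⟨hσK, hσe⟩ | ⟨F, hF, S, hS, heq⟩
  · by_cases hd : Disjoint σ ({a, b} : Finset ℕ)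
    · by_cases hcup : ({a, b} : Finset ℕ) ∪ σ ∈ K
      · -- case L1: stellar subdivision of the link
        rw [linkL1 hcplx hw hσK hd hcup]
        have hLc : IsComplex (link K σ) := isComplex_link hcplx σ
        have heL : ({a, b} : Finset ℕ) ∈ link K σ := mem_link.mpr ⟨he, hd.symm, hcup⟩
        have hwL : ∀ G ∈ link K σ, w ∉ G := fun G hG => hw _ (mem_link.mp hG).1
        have hcL : ∀ G ∈ link K σ, G.card ≤ n - σ.card := by
          intro G hG
          obtain ⟨h1, h2, h3⟩ := mem_link.mp hG
          have := hcard _ h3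
          rw [Finset.card_union_of_disjoint h2] at this
          omega
        have hps := hPoly_stellar (K := link K σ) hLc hab heL hwL hcL
        have hm2 : 2 ≤ n - σ.card := by
          have := hcard _ hcup
          rw [Finset.card_union_of_disjoint hd.symm, he2] at this
          omega
        have hll : link (link K σ) ({a, b} : Finset ℕ) = link K ({a, b} ∪ σ) :=
          link_link hcplx hd.symm
        obtain ⟨γ, hγ0, hγ⟩ := hg σ hσK
        obtain ⟨δ, hδ0, hδ⟩ := by
          have h2 := hg ({a, b} ∪ σ) hcup
          have hcc : (({a, b} : Finset ℕ) ∪ σ).card = σ.card + 2 := by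
            rw [Finset.card_union_of_disjoint hd.symm, he2]
            omega
          rw [hcc] at h2
          have hee : n - (σ.card + 2) = n - σ.card - 2 := by omega
          rw [hee] at h2
          exact h2
        refine ⟨fun i => γ i + if i = 0 then 0 else δ (i-1), by simp [hγ0], ?_⟩
        rw [hps, hll, hγ, hδ]
        exact gexp_step γ δ _ hm2
      · -- case L2: link unchanged
        rw [linkL2 hcplx hw hσK hd hcup]
        exact hg σ hσK
    · -- case L3: σ meets the edge in one vertex
      rw [Finset.not_disjoint_iff] at hd
      obtain ⟨x, hxσ, hxe⟩ := hd
      simp only [Finset.mem_insert, Finset.mem_singleton] at hxe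
      have himg : ∀ (L : Finset (Finset ℕ)) (c : ℕ),
          (∀ G ∈ L, w ∉ G) → GammaNN (n - σ.card) L →
          GammaNN (n - σ.card) (L.image fun G => if c ∈ G then insert w (G.erase c) else G) := by
        intro L c hwL ⟨γ, h0, hγ⟩
        exact ⟨γ, h0, by rw [hPoly_relabel hwL, hγ]⟩
      rcases hxe with rfl|rfl
      · -- x = a
        have hb' : b ∉ σ := by
          intro hbσ
          apply hσe
          intro y hy
          simp only [Finset.mem_insert, Finset.mem_singleton] at hy
          rcases hy with rfl|rfl
          · exact hxσ
          · exact hbσ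
        rw [linkL3 hcplx hw hab he hσK hxσ hb']
        exact himg _ _ (fun G hG => hw _ (mem_link.mp hG).1) (hg σ hσK)
      · -- x = b
        have ha' : a ∉ σ := by
          intro haσ
          apply hσe
          intro y hy
          simp only [Finset.mem_insert, Finset.mem_singleton] at hy
          rcases hy with rfl|rfl
          · exact haσ
          · exact hxσ
        rw [Finset.pair_comm a x]
        rw [linkL3 hcplx hw hab.symm (Finset.pair_comm a x ▸ he) hσK hxσ ha']
        exact himg _ _ (fun G hG => hw _ (mem_link.mp hG).1) (hg σ hσK)
  · -- new faces containing the apex w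
    rw [pair_ssubsets hab] at hS
    simp only [Finset.mem_insert, Finset.mem_singleton] at hS
    obtain ⟨hFK, hFe, hFeK⟩ := mem_link.mp hF
    have hwF : w ∉ F := hw _ hFK
    have haF : a ∉ F := fun h => Finset.disjoint_left.mp hFe h (by simp)
    have hbF : b ∉ F := fun h => Finset.disjoint_left.mp hFe h (by simp)
    have hFn : F.card + 2 ≤ n := by
      have := hcard _ hFeK
      rw [Finset.card_union_of_disjoint hFe, he2] at this
      omega
    have heF : ({a, b} : Finset ℕ) ∪ F ∈ K := by
      rw [Finset.union_comm]
      exact hFeK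
    have hcc : (({a, b} : Finset ℕ) ∪ F).card = F.card + 2 := by
      rw [Finset.card_union_of_disjoint hFe.symm, he2]
      omega
    have hGam : GammaNN (n - (F.card + 2)) (link K ({a, b} ∪ F)) := by
      have h2 := hg _ heF
      rwa [hcc] at h2
    rcases hS with rfl|rfl|rfl
    · -- S = ∅ : σ = insert w F, case L4
      have hσeq : F ∪ ∅ ∪ {w} = insert w F := by
        ext y
        simp only [Finset.union_empty, Finset.mem_union, Finset.mem_singleton, Finset.mem_insert]
        tauto
      rw [← heq, hσeq, linkL4 hcplx hw he hF,
        Finset.card_insert_of_notMem hwF]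
      obtain ⟨γ, h0, hγ⟩ := hGam
      have hL' : ∀ G ∈ link K ({a, b} ∪ F), a ∉ G ∧ b ∉ G := by
        intro G hG
        have hdd := (mem_link.mp hG).2.1
        exact ⟨fun h => Finset.disjoint_left.mp hdd h (by simp),
          fun h => Finset.disjoint_left.mp hdd h (by simp)⟩
      have hc' : ∀ G ∈ link K ({a, b} ∪ F), G.card ≤ n - (F.card + 2) := by
        intro G hG
        obtain ⟨h1, h2, h3⟩ := mem_link.mp hG
        have := hcard _ h3
        rw [Finset.card_union_of_disjoint h2, hcc] at this
        omega
      have hjoin := hPoly_joinPair (link K ({a, b} ∪ F)) a b hab hL' (n - (F.card + 2)) hc'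
      have hm1 : n - (F.card + 1) = (n - (F.card + 2)) + 1 := by omega
      refine ⟨fun i => if i ≤ (n - (F.card + 2))/2 then γ i else 0, by simp [h0], ?_⟩
      rw [hm1, hjoin, hγ]
      have := gexp_mul γ ((n - (F.card + 2)) + 1) (by omega)
      rw [Nat.add_sub_cancel] at this
      rw [this, ← hm1]
    · -- S = {a} : σ = insert w (insert a F), case L5
      have hσeq : F ∪ {a} ∪ {w} = insert w (insert a F) := by
        ext y
        simp only [Finset.mem_union, Finset.mem_singleton, Finset.mem_insert]
        tauto
      rw [← heq, hσeq, linkL5 hcplx hw he he2 hF (by simp)]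
      have hwaF : w ∉ insert a F := by
        simp only [Finset.mem_insert]
        push_neg
        exact ⟨fun h => (hw _ he) (by simp [h]), hwF⟩
      rw [Finset.card_insert_of_notMem hwaF, Finset.card_insert_of_notMem haF]
      have hee : F.card + 1 + 1 = F.card + 2 := by omega
      rw [hee]
      exact hGam
    · -- S = {b} : σ = insert w (insert b F), case L5
      have hσeq : F ∪ {b} ∪ {w} = insert w (insert b F) := by
        ext y
        simp only [Finset.mem_union, Finset.mem_singleton, Finset.mem_insert]
        tauto
      rw [← heq, hσeq, linkL5 hcplx hw he he2 hF (by simp)]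
      have hwbF : w ∉ insert b F := by
        simp only [Finset.mem_insert]
        push_neg
        exact ⟨fun h => (hw _ he) (by simp [h]), hwF⟩
      rw [Finset.card_insert_of_notMem hwbF, Finset.card_insert_of_notMem hbF]
      have hee : F.card + 1 + 1 = F.card + 2 := by omega
      rw [hee]
      exact hGam

/-- Gal's conjecture for 2-truncated cubes: for every
complex `K` obtained from `∂♢ⁿ` (`n ≥ 1`) by edge stellar subdivisions with
fresh apexes, there are nonnegative integers `γ_0 = 1, γ_1, …, γ_{⌊n/2⌋}` with
`Σ_i f_{i-1}(K) tⁱ(1-t)^{n-i} = Σ_i γ_i tⁱ(1+t)^{n-2i}`; in particular the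
h-polynomial of `K` of rank `n` is palindromic. -/
theorem gamma_nonneg_twoTruncated (n : ℕ) (hn : 1 ≤ n) (K : Finset (Finset ℕ))
    (hK : TwoTruncated n K) :
    ∃ γ : ℕ → ℕ, γ 0 = 1 ∧
      hPoly K n = ∑ i ∈ Finset.range (n / 2 + 1),
        (γ i : ℤ[X]) * X ^ i * (1 + X) ^ (n - 2 * i) ∧
      ∀ i ≤ n, (hPoly K n).coeff i = (hPoly K n).coeff (n - i) := by
  have main : (∅ : Finset ℕ) ∈ K ∧ IsComplex K ∧ (∀ F ∈ K, F.card ≤ n) ∧ Good n K := by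
    induction hK with
    | base =>
      rw [crossPolytopeBoundary_eq]
      refine ⟨?_, isComplex_crossC _, ?_, good_base n⟩
      · rw [mem_crossC]
        simp
      · intro F hF
        have := card_crossC hF
        rwa [Finset.card_range] at this
    | step K' a b w hK' hab he hw ih =>
      obtain ⟨h0, h1, h2, h3⟩ := ih
      refine ⟨?_, isComplex_stellar h1, card_stellar h2 (Finset.card_pair hab),
        good_stellar h1 h2 h3 hab he hw⟩
      apply mem_stellar.mpr
      left
      refine ⟨h0, ?_⟩
      intro hcon
      have := hcon (Finset.mem_insert_self a {b})
      simp at this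
  obtain ⟨hempty, hcplx, hcard, hgood⟩ := main
  have h := hgood ∅ hempty
  rw [link_empty] at h
  simp only [Finset.card_empty, Nat.sub_zero] at h
  obtain ⟨γ, h0, hγ⟩ := h
  refine ⟨γ, h0, hγ, ?_⟩
  intro i hi
  rw [hγ]
  exact gexp_coeff_symm γ n i hi
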